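/- Let M = sup { 2H(δ) + (1−δ)·H((β−2δ)/(1−δ)) : 0 ≤ β ≤ 1, 0 ≤ δ ≤ β/2 }. Then for every integer k ≥ 3, α_k ≥ 1 − M / log₂(k−1). -/

import Mathlib

open Filter

/-- Costs for the Levenshtein edit distance (removed from Mathlib; restored with its old meaning). -/
structure Levenshtein.Cost (α β δ : Type*) where
  delete : α → δ
  insert : β → δ
  substitute : α → β → δ

/-- The default cost: unit costs for deletion, insertion and substitution, `0` for a match. -/
def Levenshtein.defaultCost {α : Type*} [DecidableEq α] : Levenshtein.Cost α α ℕ where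
  delete _ := 1
  insert _ := 1
  substitute a b := if a = b then 0 else 1

/-- Levenshtein distance with cost `C` (old Mathlib's `levenshtein`, via its defining recursion). -/
def levenshtein {α β δ : Type*} [AddZeroClass δ] [Min δ] (C : Levenshtein.Cost α β δ) :
    List α → List β → δ
  | [], ys => ys.foldr (fun y d => C.insert y + d) 0
  | x :: xs, [] => C.delete x + levenshtein C xs []
  | x :: xs, y :: ys =>
      min (C.delete x + levenshtein C xs (y :: ys))
        (min (C.insert y + levenshtein C (x :: xs) ys) (C.substitute x y + levenshtein C xs ys))

/-- Edit distance between two strings over `Fin k`, with unit costs for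
substitution, deletion and insertion, and cost `0` for a match. -/
def editDist {k : ℕ} (x y : List (Fin k)) : ℕ :=
  levenshtein Levenshtein.defaultCost x y

/-- `e_k(n)`: the average edit distance between two independent uniformly
random strings of length `n` over an alphabet of size `k`. -/
noncomputable def avgEditDist (k n : ℕ) : ℝ :=
  ((k : ℝ) ^ (2 * n))⁻¹ *
    ∑ x : Fin n → Fin k, ∑ y : Fin n → Fin k,
      (editDist (List.ofFn x) (List.ofFn y) : ℝ)

/-- `α_k(n) = e_k(n)/n`. -/
noncomputable def alphaN (k n : ℕ) : ℝ := avgEditDist k n / n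

/-- The binary entropy function `H(t) = -t·log₂ t - (1-t)·log₂(1-t)`. -/
noncomputable def binEntropy (t : ℝ) : ℝ :=
  -(t * Real.logb 2 t) - (1 - t) * Real.logb 2 (1 - t)

/-- `M = sup { 2H(δ) + (1−δ)·H((β−2δ)/(1−δ)) : 0 ≤ β ≤ 1, 0 ≤ δ ≤ β/2 }`. -/
noncomputable def Mconst : ℝ :=
  sSup {m : ℝ | ∃ β δ : ℝ, 0 ≤ β ∧ β ≤ 1 ∧ 0 ≤ δ ∧ δ ≤ β / 2 ∧
    m = 2 * binEntropy δ + (1 - δ) * binEntropy ((β - 2 * δ) / (1 - δ))}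


theorem editDist_nil_right {k : ℕ} (x : List (Fin k)) : editDist x [] = x.length := by
  induction x with
  | nil => simp [editDist, levenshtein]
  | cons a xs ih => simp [editDist, levenshtein, Levenshtein.defaultCost] at *; omega

theorem exists_common_sublist {k : ℕ} : ∀ (x y : List (Fin k)),
    ∃ z : List (Fin k), z.Sublist x ∧ z.Sublist y ∧ x.length ≤ z.length + editDist x y
  | [], y => ⟨[], List.nil_sublist _, List.nil_sublist _, by simp⟩
  | a :: xs, [] => ⟨[], List.nil_sublist _, List.nil_sublist _, by simp [editDist_nil_right]⟩
  | a :: xs, b :: ys => by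
    have hrec : editDist (a :: xs) (b :: ys) =
        min (1 + editDist xs (b :: ys))
          (min (1 + editDist (a :: xs) ys) ((if a = b then 0 else 1) + editDist xs ys)) := by
      simp [editDist, levenshtein, Levenshtein.defaultCost]
    rcases min_choice (1 + editDist xs (b :: ys))
        (min (1 + editDist (a :: xs) ys) ((if a = b then 0 else 1) + editDist xs ys)) with h | h
    · obtain ⟨z, h1, h2, h3⟩ := exists_common_sublist xs (b :: ys)
      exact ⟨z, h1.cons a, h2, by rw [hrec, h]; simp; omega⟩
    · rw [h] at hrec; clear h
      rcases min_choice (1 + editDist (a :: xs) ys) ((if a = b then 0 else 1) + editDist xs ys)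
          with h | h
      · obtain ⟨z, h1, h2, h3⟩ := exists_common_sublist (a :: xs) ys
        exact ⟨z, h1, h2.cons b, by rw [hrec, h]; omega⟩
      · obtain ⟨z, h1, h2, h3⟩ := exists_common_sublist xs ys
        by_cases hab : a = b
        · subst hab
          exact ⟨a :: z, h1.cons₂ a, h2.cons₂ a, by rw [hrec, h]; simp; omega⟩
        · exact ⟨z, h1.cons a, h2.cons b, by rw [hrec, h]; simp [hab]; omega⟩
  termination_by x y => x.length + y.length


open Finset in
theorem card_bad_le (k n ℓ d : ℕ) (hld : ℓ + d = n) :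
    ((univ : Finset ((Fin n → Fin k) × (Fin n → Fin k))).filter
        (fun p => editDist (List.ofFn p.1) (List.ofFn p.2) < d)).card
      ≤ 2 ^ n * 2 ^ n * (k ^ n * k ^ d) := by
  classical
  set SM : Finset (Fin ℓ → Fin n) := univ.filter StrictMono with hSMdef
  set T : (Fin ℓ → Fin n) → (Fin ℓ → Fin n) → Finset ((Fin n → Fin k) × (Fin n → Fin k)) :=
    fun a b => univ.filter (fun p => ∀ i, p.1 (a i) = p.2 (b i)) with hTdef
  have hsub : (univ.filter (fun p : (Fin n → Fin k) × (Fin n → Fin k) =>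
      editDist (List.ofFn p.1) (List.ofFn p.2) < d)) ⊆
      (SM ×ˢ SM).biUnion fun ab => T ab.1 ab.2 := by
    intro p hp
    simp only [mem_filter, mem_univ, true_and] at hp
    obtain ⟨z₀, hz1, hz2, hz3⟩ := exists_common_sublist (List.ofFn p.1) (List.ofFn p.2)
    have hlx : (List.ofFn p.1).length = n := List.length_ofFn (f := p.1)
    have hlen0 : ℓ ≤ z₀.length := by omega
    set z := z₀.take ℓ with hz
    have hzl : z.length = ℓ := by simp [hz, hlen0]
    have hsx : z.Sublist (List.ofFn p.1) := (List.take_sublist ℓ z₀).trans hz1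
    have hsy : z.Sublist (List.ofFn p.2) := (List.take_sublist ℓ z₀).trans hz2
    obtain ⟨f, hf⟩ := List.sublist_iff_exists_fin_orderEmbedding_get_eq.mp hsx
    obtain ⟨g, hg⟩ := List.sublist_iff_exists_fin_orderEmbedding_get_eq.mp hsy
    refine mem_biUnion.mpr ⟨(fun i => Fin.cast (List.length_ofFn (f := p.1)) (f (Fin.cast hzl.symm i)),
      fun i => Fin.cast (List.length_ofFn (f := p.2)) (g (Fin.cast hzl.symm i))), ?_, ?_⟩
    · simp only [mem_product, hSMdef, mem_filter, mem_univ, true_and]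
      constructor
      · intro i j hij
        have h0 : (Fin.cast hzl.symm i) < Fin.cast hzl.symm j := by
          rw [Fin.lt_def, Fin.coe_cast, Fin.coe_cast]; exact hij
        have := f.strictMono h0
        rw [Fin.lt_def] at this ⊢
        rw [Fin.coe_cast, Fin.coe_cast]; exact this
      · intro i j hij
        have h0 : (Fin.cast hzl.symm i) < Fin.cast hzl.symm j := by
          rw [Fin.lt_def, Fin.coe_cast, Fin.coe_cast]; exact hij
        have := g.strictMono h0
        rw [Fin.lt_def] at this ⊢
        rw [Fin.coe_cast, Fin.coe_cast]; exact this
    · simp only [hTdef, mem_filter, mem_univ, true_and]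
      intro i
      have h1 := hf (Fin.cast hzl.symm i)
      have h2 := hg (Fin.cast hzl.symm i)
      rw [List.get_ofFn] at h1
      rw [List.get_ofFn] at h2
      exact h1.symm.trans h2
  have hSMcard : SM.card ≤ 2 ^ n := by
    refine le_trans (card_le_card_of_injOn (fun a => Finset.image a univ)
      (fun _ _ => mem_univ _) ?_) ?_
    · intro a ha b hb hab
      simp only [hSMdef, coe_filter, mem_univ, true_and, Set.mem_setOf_eq] at ha hb
      have hca : (Finset.image a univ).card = ℓ := by
        rw [card_image_of_injective _ ha.injective, card_univ, Fintype.card_fin]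
      have hcb : (Finset.image b univ).card = ℓ := by
        rw [card_image_of_injective _ hb.injective, card_univ, Fintype.card_fin]
      simp only at hab
      have hr : Set.range a = Set.range b := by
        rw [← Set.image_univ, ← Set.image_univ, ← Finset.coe_univ, ← Finset.coe_image,
          ← Finset.coe_image, hab]
      have hwf : WellFoundedLT (Fin ℓ) := inferInstance
      exact (StrictMono.range_inj (f := a) (g := b) ha hb).mp hr
    · rw [card_univ, Fintype.card_finset, Fintype.card_fin]
  have hTcard : ∀ a b : Fin ℓ → Fin n, StrictMono b → (T a b).card ≤ k ^ n * k ^ d := by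
    intro a b hb
    set B : Finset (Fin n) := Finset.image b univ with hBdef
    have hBcard : B.card = ℓ := by
      rw [hBdef, card_image_of_injective _ hb.injective, card_univ, Fintype.card_fin]
    have hcard : (T a b).card ≤ Fintype.card ((Fin n → Fin k) × ({j // j ∈ Bᶜ} → Fin k)) := by
      rw [← card_univ]
      refine card_le_card_of_injOn
        (fun p => (p.1, fun j => p.2 j.1)) (fun _ _ => mem_univ _) ?_
      intro p hp q hq heq
      simp only [hTdef, coe_filter, mem_univ, true_and, Set.mem_setOf_eq] at hp hq
      simp only [Prod.mk.injEq] at heq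
      obtain ⟨h1, h2⟩ := heq
      refine Prod.ext h1 (funext fun j => ?_)
      by_cases hj : j ∈ B
      · obtain ⟨i, -, rfl⟩ := mem_image.mp hj
        rw [← hp i, ← hq i, h1]
      · exact congrFun h2 ⟨j, by simpa using hj⟩
    refine hcard.trans (le_of_eq ?_)
    have hcompl : Fintype.card {j // j ∈ Bᶜ} = d := by
      rw [Fintype.card_coe, card_compl, hBcard, Fintype.card_fin]
      omega
    have hd : n - ℓ = d := by omega
    rw [Fintype.card_prod, Fintype.card_fun, Fintype.card_fun, hcompl, Fintype.card_fin,
      Fintype.card_fin]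
  calc ((univ : Finset ((Fin n → Fin k) × (Fin n → Fin k))).filter
        (fun p => editDist (List.ofFn p.1) (List.ofFn p.2) < d)).card
      ≤ ((SM ×ˢ SM).biUnion fun ab => T ab.1 ab.2).card := card_le_card hsub
    _ ≤ ∑ ab ∈ SM ×ˢ SM, (T ab.1 ab.2).card := card_biUnion_le
    _ ≤ (SM ×ˢ SM).card * (k ^ n * k ^ d) := by
        rw [← smul_eq_mul]
        exact sum_le_card_nsmul _ _ _ (fun ab _ => hTcard ab.1 ab.2 (by
          have := (mem_product.mp ‹ab ∈ SM ×ˢ SM›).2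
          simpa [hSMdef] using this))
    _ ≤ 2 ^ n * 2 ^ n * (k ^ n * k ^ d) := by
        rw [card_product]
        exact Nat.mul_le_mul (Nat.mul_le_mul hSMcard hSMcard) le_rfl

theorem binEntropy_eq (t : ℝ) : binEntropy t = Real.binEntropy t / Real.log 2 := by
  rw [binEntropy, Real.binEntropy, Real.logb, Real.logb, Real.log_inv, Real.log_inv]
  ring

theorem binEntropy_le_one (t : ℝ) : binEntropy t ≤ 1 := by
  rw [binEntropy_eq]
  rw [div_le_one (Real.log_pos (by norm_num))]
  exact Real.binEntropy_le_log_two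

theorem MconstSet_bddAbove : BddAbove {m : ℝ | ∃ β δ : ℝ, 0 ≤ β ∧ β ≤ 1 ∧ 0 ≤ δ ∧ δ ≤ β / 2 ∧
    m = 2 * binEntropy δ + (1 - δ) * binEntropy ((β - 2 * δ) / (1 - δ))} := by
  refine ⟨3, ?_⟩
  rintro m ⟨β, δ, hβ0, hβ1, hδ0, hδβ, rfl⟩
  have h1 : binEntropy δ ≤ 1 := binEntropy_le_one δ
  have h2 : binEntropy ((β - 2 * δ) / (1 - δ)) ≤ 1 := binEntropy_le_one _
  have hδhalf : δ ≤ 1 / 2 := by linarith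
  nlinarith [binEntropy_le_one δ]

theorem two_le_Mconst : 2 ≤ Mconst := by
  have hmem : (2 : ℝ) ∈ {m : ℝ | ∃ β δ : ℝ, 0 ≤ β ∧ β ≤ 1 ∧ 0 ≤ δ ∧ δ ≤ β / 2 ∧
      m = 2 * binEntropy δ + (1 - δ) * binEntropy ((β - 2 * δ) / (1 - δ))} := by
    refine ⟨1, 1/2, by norm_num, le_refl 1, by norm_num, by norm_num, ?_⟩
    have hhalf : binEntropy (1/2 : ℝ) = 1 := by
      have hlog : Real.logb 2 (1/2 : ℝ) = -1 := by
        rw [one_div, Real.logb_inv, Real.logb_self_eq_one] <;> norm_num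
      rw [binEntropy, show (1 : ℝ) - 1/2 = 1/2 by norm_num, hlog]
      norm_num
    have h0 : binEntropy ((1 - 2 * (1/2)) / (1 - 1/2) : ℝ) = 0 := by
      norm_num [binEntropy]
    rw [hhalf, h0]
    norm_num
  exact le_csSup MconstSet_bddAbove hmem

theorem alphaN_nonneg (k n : ℕ) : 0 ≤ alphaN k n := by
  unfold alphaN avgEditDist
  positivity

theorem card_univ_pairs (k n : ℕ) :
    ((Finset.univ : Finset ((Fin n → Fin k) × (Fin n → Fin k))).card : ℝ) = (k:ℝ) ^ (2*n) := by
  rw [Finset.card_univ]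
  simp only [Fintype.card_prod, Fintype.card_fun, Fintype.card_fin]
  rw [← pow_add, two_mul]
  push_cast
  ring

theorem beta_le_alpha (k : ℕ) (hk : 3 ≤ k) (α β : ℝ) (hβ0 : 0 ≤ β) (hβ1 : β < 1)
    (hβk : 2 < (1 - β) * Real.logb 2 k)
    (hconv : Tendsto (fun n => alphaN k n) atTop (nhds α)) : β ≤ α := by
  have hk0 : (0:ℝ) < k := by positivity
  have hk1 : (1:ℝ) ≤ k := by exact_mod_cast Nat.one_le_of_lt hk
  set r : ℝ := 4 * (k:ℝ) ^ (β - 1) with hr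
  have hrpos : 0 ≤ r := by positivity
  have hr1 : r < 1 := by
    have h4 : (4:ℝ) < (k:ℝ) ^ (1 - β) := by
      have h2k : (2:ℝ) ^ Real.logb 2 (k:ℝ) = (k:ℝ) :=
        Real.rpow_logb two_pos (by norm_num) hk0
      calc (4:ℝ) = 2 ^ (2:ℝ) := by
            rw [show (2:ℝ) = ((2:ℕ):ℝ) by norm_num, Real.rpow_natCast]; norm_num
        _ < 2 ^ ((1-β) * Real.logb 2 (k:ℝ)) :=
            Real.rpow_lt_rpow_of_exponent_lt one_lt_two hβk
        _ = ((2:ℝ) ^ Real.logb 2 (k:ℝ)) ^ (1-β) := by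
            rw [← Real.rpow_mul (by norm_num : (0:ℝ) ≤ 2)]; ring_nf
        _ = (k:ℝ) ^ (1-β) := by rw [h2k]
    have hkpow : (0:ℝ) < (k:ℝ) ^ (1-β) := Real.rpow_pos_of_pos hk0 _
    have hinv : (k:ℝ) ^ (β - 1) = ((k:ℝ) ^ (1 - β))⁻¹ := by
      rw [← Real.rpow_neg hk0.le]; ring_nf
    rw [hr, hinv, mul_inv_lt_iff₀ hkpow, one_mul]
    exact h4
  have hmain : ∀ n : ℕ, 1 ≤ n → β - 1/(n:ℝ) - r ^ n ≤ alphaN k n := by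
    intro n hn
    have hnR : (0:ℝ) < n := by exact_mod_cast hn
    set d : ℕ := ⌊β * n⌋₊ with hd
    have hdup : (d:ℝ) ≤ β * n := Nat.floor_le (by positivity)
    have hdn : d ≤ n := by
      have h1 : β * n ≤ (n:ℝ) := by nlinarith
      calc d ≤ ⌊(n:ℝ)⌋₊ := Nat.floor_mono h1
        _ = n := Nat.floor_natCast n
    have hdlow : β * n - 1 < (d:ℝ) := by
      have := Nat.lt_floor_add_one (β * n)
      push_cast
      linarith
    classical
    set Bad := (Finset.univ : Finset ((Fin n → Fin k) × (Fin n → Fin k))).filter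
        (fun p => editDist (List.ofFn p.1) (List.ofFn p.2) < d) with hBad
    have hBadcard : Bad.card ≤ 2^n * 2^n * (k^n * k^d) :=
      card_bad_le k n (n - d) d (by omega)
    set K : ℝ := (k:ℝ) ^ (2*n) with hK
    have hKpos : 0 < K := by positivity
    -- bound on Bad.card over K
    have hQ : (Bad.card : ℝ) ≤ r ^ n * K := by
      have h1 : (Bad.card:ℝ) ≤ (2:ℝ)^n * 2^n * ((k:ℝ)^n * (k:ℝ)^d) := by exact_mod_cast hBadcard
      have h2 : ((k:ℝ))^d ≤ (k:ℝ) ^ (β * n) := by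
        rw [← Real.rpow_natCast (k:ℝ) d]
        exact Real.rpow_le_rpow_of_exponent_le hk1 hdup
      have e3 : ((k:ℝ)^(β-1))^n = (k:ℝ) ^ ((β-1) * n) := by
        rw [← Real.rpow_natCast ((k:ℝ)^(β-1)) n, ← Real.rpow_mul hk0.le]
      have e4 : ((k:ℝ) : ℝ) ^ ((2*n : ℕ) : ℝ) = (k:ℝ) ^ (2*n) := Real.rpow_natCast _ _
      have e5 : (k:ℝ) ^ ((β-1)*(n:ℝ)) * (k:ℝ) ^ (((2*n:ℕ)):ℝ) =
          (k:ℝ) ^ (((n:ℕ)):ℝ) * (k:ℝ) ^ (β * n) := by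
        rw [← Real.rpow_add hk0, ← Real.rpow_add hk0]
        congr 1
        push_cast
        try ring
      have h3 : r ^ n * K = (2:ℝ)^n * 2^n * ((k:ℝ)^n * (k:ℝ) ^ (β * n)) := by
        rw [hK, hr, mul_pow, e3, ← e4, mul_assoc, e5, Real.rpow_natCast]
        rw [show ((4:ℝ))^n = 2^n * 2^n by rw [← mul_pow]; norm_num]
        try ring
      calc (Bad.card : ℝ) ≤ (2:ℝ)^n * 2^n * ((k:ℝ)^n * (k:ℝ)^d) := h1
        _ ≤ (2:ℝ)^n * 2^n * ((k:ℝ)^n * (k:ℝ) ^ (β * n)) := by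
            refine mul_le_mul_of_nonneg_left (mul_le_mul_of_nonneg_left h2 (by positivity))
              (by positivity)
        _ = r ^ n * K := h3.symm
    -- sum lower bound
    have hsum : (d : ℝ) * (K - Bad.card) ≤
        ∑ x : Fin n → Fin k, ∑ y : Fin n → Fin k, (editDist (List.ofFn x) (List.ofFn y) : ℝ) := by
      rw [← Finset.sum_product']
      set Good := (Finset.univ : Finset ((Fin n → Fin k) × (Fin n → Fin k))).filter
          (fun p => ¬ editDist (List.ofFn p.1) (List.ofFn p.2) < d) with hGood
      have hcards : (Bad.card : ℝ) + Good.card = K := by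
        have hc' : Bad.card + Good.card = (Finset.univ :
            Finset ((Fin n → Fin k) × (Fin n → Fin k))).card := by
          rw [hBad, hGood]
          exact Finset.card_filter_add_card_filter_not _
        rw [hK, ← card_univ_pairs k n]
        exact_mod_cast hc'
      have h1 : (Good.card : ℝ) * d ≤ ∑ p ∈ Good, (editDist (List.ofFn p.1) (List.ofFn p.2) : ℝ) := by
        have h1' : ∑ _p ∈ Good, (d:ℝ) ≤
            ∑ p ∈ Good, (editDist (List.ofFn p.1) (List.ofFn p.2) : ℝ) := by
          refine Finset.sum_le_sum fun p hp => ?_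
          simp only [hGood, Finset.mem_filter] at hp
          exact_mod_cast Nat.le_of_not_lt hp.2
        rwa [Finset.sum_const, nsmul_eq_mul] at h1'
      have h2 : ∑ p ∈ Good, (editDist (List.ofFn p.1) (List.ofFn p.2) : ℝ) ≤
          ∑ p ∈ ((Finset.univ ×ˢ Finset.univ : Finset ((Fin n → Fin k) × (Fin n → Fin k)))), (editDist (List.ofFn p.1) (List.ofFn p.2) : ℝ) := by
        rw [Finset.univ_product_univ]
        exact Finset.sum_le_sum_of_subset_of_nonneg (Finset.filter_subset _ _)
          (fun p _ _ => by positivity)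
      have heq : K - Bad.card = (Good.card : ℝ) := by linarith
      rw [heq, mul_comm]
      exact h1.trans h2
    -- conclude
    have havg : (d:ℝ) - (n:ℝ) * r ^ n ≤ avgEditDist k n := by
      have h1 : K⁻¹ * ((d : ℝ) * (K - Bad.card)) ≤ avgEditDist k n := by
        rw [avgEditDist]
        exact mul_le_mul_of_nonneg_left hsum (by positivity)
      have h2 : K⁻¹ * ((d : ℝ) * (K - Bad.card)) = (d:ℝ) - (d:ℝ) * (Bad.card / K) := by
        field_simp
        try ring
      have h3 : (d:ℝ) * (Bad.card / K) ≤ (n:ℝ) * r ^ n := by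
        have hb : (Bad.card : ℝ)/K ≤ r ^ n := by
          rw [div_le_iff₀ hKpos]; exact hQ
        have hd' : (d:ℝ) ≤ n := by exact_mod_cast hdn
        have : (0:ℝ) ≤ (Bad.card:ℝ)/K := by positivity
        nlinarith
      linarith
    rw [alphaN, le_div_iff₀ hnR]
    have : (β - 1/(n:ℝ) - r^n) * n = β * n - 1 - n * r^n := by
      field_simp
      try ring
    rw [this]
    linarith
  have hg : Tendsto (fun n : ℕ => β - 1/(n:ℝ) - r ^ n) atTop (nhds β) := by
    have h1 : Tendsto (fun n : ℕ => 1/(n:ℝ)) atTop (nhds 0) :=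
      tendsto_one_div_atTop_nhds_zero_nat
    have h2 : Tendsto (fun n : ℕ => r ^ n) atTop (nhds 0) :=
      tendsto_pow_atTop_nhds_zero_of_lt_one hrpos hr1
    have := (tendsto_const_nhds (x := β) (f := atTop)).sub h1 |>.sub h2
    simpa using this
  exact le_of_tendsto_of_tendsto hg hconv
    (Filter.eventually_atTop.mpr ⟨1, fun n hn => hmain n hn⟩)

/-- For every integer `k ≥ 3`, `α_k ≥ 1 − M / log₂(k−1)`. -/
theorem alpha_lower_bound_large_k (k : ℕ) (hk : 3 ≤ k) (α : ℝ)
    (hconv : Tendsto (fun n => alphaN k n) atTop (nhds α)) :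
    1 - Mconst / Real.logb 2 ((k : ℝ) - 1) ≤ α := by
  have hk3 : (3:ℝ) ≤ (k:ℝ) := by exact_mod_cast hk
  have hL : (1:ℝ) ≤ Real.logb 2 ((k:ℝ) - 1) := by
    calc (1:ℝ) = Real.logb 2 2 := (Real.logb_self_eq_one (by norm_num)).symm
      _ ≤ Real.logb 2 ((k:ℝ) - 1) :=
        Real.logb_le_logb_of_le (by norm_num) (by norm_num) (by linarith)
  have hL0 : (0:ℝ) < Real.logb 2 ((k:ℝ) - 1) := by linarith
  have hM := two_le_Mconst
  have hα0 : 0 ≤ α := ge_of_tendsto' hconv (fun n => alphaN_nonneg k n)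
  by_contra hcon
  push_neg at hcon
  set L := Real.logb 2 ((k:ℝ) - 1) with hLdef
  set T : ℝ := 1 - Mconst / L with hT
  have hαT : α < T := hcon
  obtain ⟨β, hαβ, hβT⟩ := exists_between hαT
  have hT1 : T < 1 := by
    have : 0 < Mconst / L := div_pos (by linarith) hL0
    rw [hT]; linarith
  have hβ0 : 0 ≤ β := by linarith
  have hβ1 : β < 1 := lt_trans hβT hT1
  have hβk : 2 < (1 - β) * Real.logb 2 (k:ℝ) := by
    have hML : Mconst < (1 - β) * L := by
      have h1 : Mconst / L < 1 - β := by rw [hT] at hβT; linarith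
      calc Mconst = (Mconst / L) * L := by field_simp
        _ < (1 - β) * L := by
          exact mul_lt_mul_of_pos_right h1 hL0
    have hLk : L ≤ Real.logb 2 (k:ℝ) :=
      Real.logb_le_logb_of_le (by norm_num) (by linarith) (by linarith)
    have h1β : 0 < 1 - β := by linarith
    nlinarith
  have := beta_le_alpha k hk α β hβ0 hβ1 hβk hconv
  linarith
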